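/- Let γ : I → ℝ^{n+2} be a C² unit-speed curve with small acceleration in ℍ^{n+1}, let y₀ ∈ ℍ^{n+1}, and let t₀ be an interior point of I with ⟨γ'(t₀), y₀⟩ = 0 and γ(t₀) ≠ y₀. Then ⟨γ''(t₀), y₀⟩ < 0; consequently, the function t ↦ ⟨γ(t), y₀⟩ has a strict local maximum at every such critical point, and in particular it has no interior local minimum at a parameter where γ ≠ y₀. -/

import Mathlib

open scoped Topology

/-- The Minkowski bilinear form on `ℝ^{n+2}`:
`⟨x,y⟩ = x₁y₁ + ⋯ + x_{n+1}y_{n+1} − x_{n+2}y_{n+2}`. -/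
noncomputable def mink (n : ℕ) (x y : Fin (n + 2) → ℝ) : ℝ :=
  (∑ i : Fin (n + 1), x i.castSucc * y i.castSucc) -
    x (Fin.last (n + 1)) * y (Fin.last (n + 1))

lemma mink_comm (n : ℕ) (x y : Fin (n+2) → ℝ) : mink n x y = mink n y x := by
  simp only [mink, mul_comm]

lemma mink_add_left (n : ℕ) (x y z : Fin (n+2) → ℝ) :
    mink n (x + y) z = mink n x z + mink n y z := by
  simp only [mink, Pi.add_apply, add_mul, Finset.sum_add_distrib]; ring

lemma mink_sub_left (n : ℕ) (x y z : Fin (n+2) → ℝ) :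
    mink n (x - y) z = mink n x z - mink n y z := by
  simp only [mink, Pi.sub_apply, sub_mul, Finset.sum_sub_distrib]; ring

lemma mink_smul_left (n : ℕ) (s : ℝ) (x z : Fin (n+2) → ℝ) :
    mink n (fun i => s * x i) z = s * mink n x z := by
  simp only [mink, Finset.mul_sum, mul_sub, mul_assoc]

-- Cauchy-Schwarz on spatial part
lemma spatial_cs (n : ℕ) (x y : Fin (n+2) → ℝ) :
    (∑ i : Fin (n+1), x i.castSucc * y i.castSucc)^2 ≤
      (∑ i : Fin (n+1), x i.castSucc * x i.castSucc) *
      (∑ i : Fin (n+1), y i.castSucc * y i.castSucc) := by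
  have := Finset.sum_mul_sq_le_sq_mul_sq Finset.univ
    (fun i : Fin (n+1) => x i.castSucc) (fun i => y i.castSucc)
  simpa [pow_two] using this

lemma last_ge_one (n : ℕ) (x : Fin (n+2) → ℝ) (hx : mink n x x = -1)
    (hxL : 0 < x (Fin.last (n+1))) : 1 ≤ x (Fin.last (n+1)) := by
  have hS : (0:ℝ) ≤ ∑ i : Fin (n+1), x i.castSucc * x i.castSucc :=
    Finset.sum_nonneg fun i _ => mul_self_nonneg _
  simp only [mink] at hx
  nlinarith [hS, sq_nonneg (x (Fin.last (n+1)) - 1)]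

lemma perp_nonneg (n : ℕ) (x u : Fin (n+2) → ℝ) (hx : mink n x x = -1)
    (hxL : 0 < x (Fin.last (n+1))) (hperp : mink n u x = 0) :
    0 ≤ mink n u u := by
  have hL := last_ge_one n x hx hxL
  have hcs := spatial_cs n u x
  have hSu : (0:ℝ) ≤ ∑ i : Fin (n+1), u i.castSucc * u i.castSucc :=
    Finset.sum_nonneg fun i _ => mul_self_nonneg _
  simp only [mink] at hx hperp ⊢
  set Su := ∑ i : Fin (n+1), u i.castSucc * u i.castSucc
  set Sx := ∑ i : Fin (n+1), x i.castSucc * x i.castSucc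
  set Sux := ∑ i : Fin (n+1), u i.castSucc * x i.castSucc
  set uL := u (Fin.last (n+1)); set xL := x (Fin.last (n+1))
  have hx1 : 0 ≤ xL * xL - 1 := by nlinarith
  have hSx : Sx = xL * xL - 1 := by linarith
  have hSux : Sux = uL * xL := by linarith
  have hcs' : (uL * xL)^2 ≤ Su * (xL * xL - 1) := by rw [← hSx, ← hSux]; exact hcs
  nlinarith [hcs', hSu, hx1, sq_nonneg uL]

lemma pairing_le (n : ℕ) (x y : Fin (n+2) → ℝ) (hx : mink n x x = -1)
    (hxL : 0 < x (Fin.last (n+1))) (hy : mink n y y = -1)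
    (hyL : 0 < y (Fin.last (n+1))) : mink n x y ≤ -1 := by
  have hLx := last_ge_one n x hx hxL
  have hLy := last_ge_one n y hy hyL
  have hcs := spatial_cs n x y
  simp only [mink] at hx hy ⊢
  set Sxy := ∑ i : Fin (n+1), x i.castSucc * y i.castSucc
  set xL := x (Fin.last (n+1)); set yL := y (Fin.last (n+1))
  have h1 : (0:ℝ) ≤ xL * yL - 1 := by nlinarith
  by_contra hcon
  push_neg at hcon
  have h2 : 0 < Sxy - (xL*yL - 1) := by linarith
  have h3 : (xL*yL - 1)^2 < Sxy^2 := by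
    nlinarith [mul_pos h2 (by linarith : (0:ℝ) < Sxy + (xL*yL - 1))]
  nlinarith [sq_nonneg (xL - yL), hcs, h3]

lemma cs_perp (n : ℕ) (x u v : Fin (n+2) → ℝ) (hx : mink n x x = -1)
    (hxL : 0 < x (Fin.last (n+1))) (hu : mink n u x = 0) (hv : mink n v x = 0) :
    (mink n u v)^2 ≤ mink n u u * mink n v v := by
  have key : ∀ s : ℝ, 0 ≤ (mink n v v) * (s*s) + (2 * mink n u v) * s + mink n u u := by
    intro s
    have hperp : mink n (fun i => u i + s * v i) x = 0 := by
      have : (fun i => u i + s * v i) = u + (fun i => s * v i) := rfl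
      rw [this, mink_add_left, mink_smul_left, hu, hv]; ring
    have h0 := perp_nonneg n x _ hx hxL hperp
    have hexp : mink n (fun i => u i + s * v i) (fun i => u i + s * v i)
        = (mink n v v) * (s*s) + (2 * mink n u v) * s + mink n u u := by
      have e1 : (fun i => u i + s * v i) = u + (fun i => s * v i) := rfl
      have expand : ∀ w z : Fin (n+2) → ℝ,
          mink n (w + fun i => s * v i) z = mink n w z + s * mink n v z := fun w z => by
        rw [mink_add_left, mink_smul_left]
      have expand' : ∀ w z : Fin (n+2) → ℝ,
          mink n z (w + fun i => s * v i) = mink n z w + s * mink n z v := fun w z => by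
        rw [mink_comm, expand, mink_comm n w z, mink_comm n v z]
      rw [e1, expand, expand', expand', mink_comm n v u]
      ring
    linarith [hexp ▸ h0]
  have hd := discrim_le_zero key
  simp only [discrim] at hd
  nlinarith [hd]

lemma mink_add_right (n : ℕ) (x y z : Fin (n+2) → ℝ) :
    mink n z (x + y) = mink n z x + mink n z y := by
  rw [mink_comm, mink_add_left, mink_comm n x z, mink_comm n y z]

lemma mink_smul_right (n : ℕ) (s : ℝ) (x z : Fin (n+2) → ℝ) :
    mink n z (fun i => s * x i) = s * mink n z x := by
  rw [mink_comm, mink_smul_left, mink_comm]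

lemma key_neg (n : ℕ) (x y a : Fin (n+2) → ℝ) (hx : mink n x x = -1)
    (hxL : 0 < x (Fin.last (n+1))) (hy : mink n y y = -1)
    (hyL : 0 < y (Fin.last (n+1))) (hax : mink n a x = 0)
    (haa : mink n a a < 1) : mink n a y + mink n x y < 0 := by
  set m := mink n x y with hm
  have hc : m ≤ -1 := pairing_le n x y hx hxL hy hyL
  set w : Fin (n+2) → ℝ := y + (fun i => m * x i) with hw
  have hwx : mink n w x = 0 := by
    rw [hw, mink_add_left, mink_smul_left, hx, mink_comm n y x, ← hm]; ring
  have hww : mink n w w = m^2 - 1 := by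
    rw [hw, mink_add_left, mink_add_right, mink_add_right, mink_smul_left,
      mink_smul_left, mink_smul_right, mink_smul_right, hx, hy, mink_comm n y x, ← hm]
    ring
  have haw : mink n a w = mink n a y := by
    rw [hw, mink_add_right, mink_smul_right, hax]; ring
  have haa0 : 0 ≤ mink n a a := perp_nonneg n x a hx hxL hax
  have hcs := cs_perp n x a w hx hxL hax hwx
  rw [haw, hww] at hcs
  -- (mink a y)^2 ≤ mink a a * (m^2 - 1) ≤ m^2 - 1 < m^2
  have hm1 : 0 ≤ m^2 - 1 := by nlinarith
  have h2 : (mink n a y)^2 < m^2 := by nlinarith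
  nlinarith [h2, hc]

lemma hasDerivAt_mink (n : ℕ) {u v : ℝ → Fin (n+2) → ℝ} {u' v' : Fin (n+2) → ℝ} {t : ℝ}
    (hu : HasDerivAt u u' t) (hv : HasDerivAt v v' t) :
    HasDerivAt (fun t => mink n (u t) (v t)) (mink n u' (v t) + mink n (u t) v') t := by
  have hui := hasDerivAt_pi.mp hu
  have hvi := hasDerivAt_pi.mp hv
  have hsum : HasDerivAt (fun t => ∑ i : Fin (n+1), u t i.castSucc * v t i.castSucc)
      (∑ i : Fin (n+1), (u' i.castSucc * v t i.castSucc + u t i.castSucc * v' i.castSucc)) t :=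
    HasDerivAt.fun_sum fun i _ => (hui i.castSucc).mul (hvi i.castSucc)
  have hlast : HasDerivAt (fun t => u t (Fin.last (n+1)) * v t (Fin.last (n+1)))
      (u' (Fin.last (n+1)) * v t (Fin.last (n+1)) +
        u t (Fin.last (n+1)) * v' (Fin.last (n+1))) t :=
    (hui _).mul (hvi _)
  have := hsum.fun_sub hlast
  convert this using 1
  · rfl
  · rfl
  · rfl
  simp only [mink, Finset.sum_add_distrib]
  ring

lemma mink_zero_right (n : ℕ) (z : Fin (n+2) → ℝ) : mink n z 0 = 0 := by
  simp [mink]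


/-- A unit-speed curve with small acceleration in `ℍ^{n+1}` which is tangent to a metric
sphere centered at `y₀` at an interior parameter `t₀` (with `γ(t₀) ≠ y₀`) satisfies
`⟨γ''(t₀), y₀⟩ < 0`; consequently `t ↦ ⟨γ(t), y₀⟩` has a strict local maximum at every
such critical point (hence no interior local minimum there). -/
theorem small_acceleration_no_interior_min
    (n : ℕ) (I : Set ℝ) (hI : I.OrdConnected)
    (γ γ' γ'' : ℝ → Fin (n + 2) → ℝ)
    (hd1 : ∀ t ∈ I, HasDerivWithinAt γ (γ' t) I t)
    (hd2 : ∀ t ∈ I, HasDerivWithinAt γ' (γ'' t) I t)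
    (hcont : ContinuousOn γ'' I)
    (hhyp : ∀ t ∈ I, mink n (γ t) (γ t) = -1)
    (hpos : ∀ t ∈ I, 0 < γ t (Fin.last (n + 1)))
    (hspeed : ∀ t ∈ I, mink n (γ' t) (γ' t) = 1)
    (hacc : ∀ t ∈ I, mink n (γ'' t - γ t) (γ'' t - γ t) < 1)
    (y₀ : Fin (n + 2) → ℝ) (hy₀ : mink n y₀ y₀ = -1)
    (hy₀pos : 0 < y₀ (Fin.last (n + 1)))
    (t₀ : ℝ) (ht₀ : t₀ ∈ interior I)
    (hcrit : mink n (γ' t₀) y₀ = 0) (hne : γ t₀ ≠ y₀) :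
    mink n (γ'' t₀) y₀ < 0 ∧
    ∀ᶠ t in 𝓝[≠] t₀, mink n (γ t) y₀ < mink n (γ t₀) y₀ := by
  have hIopen : IsOpen (interior I) := isOpen_interior
  have hda : ∀ t ∈ interior I, HasDerivAt γ (γ' t) t := fun t ht =>
    (hd1 t (interior_subset ht)).hasDerivAt (mem_interior_iff_mem_nhds.mp ht)
  have hda' : ∀ t ∈ interior I, HasDerivAt γ' (γ'' t) t := fun t ht =>
    (hd2 t (interior_subset ht)).hasDerivAt (mem_interior_iff_mem_nhds.mp ht)
  have horth : ∀ t ∈ interior I, mink n (γ' t) (γ t) = 0 := by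
    intro t ht
    have h1 : HasDerivAt (fun s => mink n (γ s) (γ s))
        (mink n (γ' t) (γ t) + mink n (γ t) (γ' t)) t :=
      hasDerivAt_mink n (hda t ht) (hda t ht)
    have heq : (fun s => mink n (γ s) (γ s)) =ᶠ[nhds t] fun _ => (-1 : ℝ) := by
      filter_upwards [hIopen.mem_nhds ht] with s hs using hhyp s (interior_subset hs)
    have h2 : HasDerivAt (fun s => mink n (γ s) (γ s)) 0 t :=
      (hasDerivAt_const t (-1 : ℝ)).congr_of_eventuallyEq heq
    have h3 := h1.unique h2
    rw [mink_comm n (γ t) (γ' t)] at h3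
    linarith
  have hsecond : mink n (γ'' t₀) (γ t₀) = -1 := by
    have h1 : HasDerivAt (fun s => mink n (γ' s) (γ s))
        (mink n (γ'' t₀) (γ t₀) + mink n (γ' t₀) (γ' t₀)) t₀ :=
      hasDerivAt_mink n (hda' t₀ ht₀) (hda t₀ ht₀)
    have heq : (fun s => mink n (γ' s) (γ s)) =ᶠ[nhds t₀] fun _ => (0 : ℝ) := by
      filter_upwards [hIopen.mem_nhds ht₀] with s hs using horth s hs
    have h2 : HasDerivAt (fun s => mink n (γ' s) (γ s)) 0 t₀ :=
      (hasDerivAt_const t₀ (0 : ℝ)).congr_of_eventuallyEq heq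
    have h3 := h1.unique h2
    have h4 := hspeed t₀ (interior_subset ht₀)
    linarith
  have hax : mink n (γ'' t₀ - γ t₀) (γ t₀) = 0 := by
    rw [mink_sub_left, hsecond, hhyp t₀ (interior_subset ht₀)]; ring
  have hmain := key_neg n (γ t₀) y₀ (γ'' t₀ - γ t₀) (hhyp t₀ (interior_subset ht₀))
    (hpos t₀ (interior_subset ht₀)) hy₀ hy₀pos hax (hacc t₀ (interior_subset ht₀))
  rw [mink_sub_left] at hmain
  have hfirst : mink n (γ'' t₀) y₀ < 0 := by linarith
  refine ⟨hfirst, ?_⟩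
  -- derivatives of f and g
  have hdf : ∀ t ∈ interior I,
      HasDerivAt (fun s => mink n (γ s) y₀) (mink n (γ' t) y₀) t := by
    intro t ht
    have := hasDerivAt_mink n (hda t ht) (hasDerivAt_const t y₀)
    simpa [mink_zero_right] using this
  have hdg : ∀ t ∈ interior I,
      HasDerivAt (fun s => mink n (γ' s) y₀) (mink n (γ'' t) y₀) t := by
    intro t ht
    have := hasDerivAt_mink n (hda' t ht) (hasDerivAt_const t y₀)
    simpa [mink_zero_right] using this
  -- continuity of h := mink (γ'' ·) y₀ at t₀
  have hmc : Continuous (fun z : Fin (n+2) → ℝ => mink n z y₀) := by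
    unfold mink
    fun_prop
  have hA : ContinuousAt (fun t => mink n (γ'' t) y₀) t₀ :=
    (hmc.comp_continuousOn hcont).continuousAt (mem_interior_iff_mem_nhds.mp ht₀)
  have hev1 : ∀ᶠ t in nhds t₀, mink n (γ'' t) y₀ < 0 :=
    hA (Iio_mem_nhds hfirst)
  have hev : ∀ᶠ t in nhds t₀, mink n (γ'' t) y₀ < 0 ∧ t ∈ interior I :=
    hev1.and (hIopen.mem_nhds ht₀)
  obtain ⟨δ, hδ, hδsub⟩ := Metric.eventually_nhds_iff.mp hev
  set J := Set.Ioo (t₀ - δ) (t₀ + δ) with hJdef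
  have hJ : ∀ t ∈ J, mink n (γ'' t) y₀ < 0 ∧ t ∈ interior I := by
    intro t ht
    refine hδsub ?_
    rw [Real.dist_eq]
    exact abs_sub_lt_iff.mpr ⟨by linarith [ht.1, ht.2], by linarith [ht.1, ht.2]⟩
  have ht₀J : t₀ ∈ J := ⟨by linarith, by linarith⟩
  have hganti : StrictAntiOn (fun t => mink n (γ' t) y₀) J := by
    apply strictAntiOn_of_deriv_neg (convex_Ioo _ _)
    · exact fun t ht => (hdg t (hJ t ht).2).continuousAt.continuousWithinAt
    · intro t ht
      rw [interior_Ioo] at ht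
      rw [(hdg t (hJ t ht).2).deriv]
      exact (hJ t ht).1
  have hJnhds : J ∈ nhds t₀ := Ioo_mem_nhds (by linarith) (by linarith)
  filter_upwards [mem_nhdsWithin_of_mem_nhds hJnhds, self_mem_nhdsWithin] with t htJ htne
  have htne' : t ≠ t₀ := htne
  rcases lt_or_gt_of_ne htne' with hlt | hgt
  · -- t < t₀
    have hsub : Set.Icc t t₀ ⊆ J := fun s hs =>
      ⟨lt_of_lt_of_le htJ.1 hs.1, lt_of_le_of_lt hs.2 ht₀J.2⟩
    have hcontf : ContinuousOn (fun s => mink n (γ s) y₀) (Set.Icc t t₀) := fun s hs =>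
      ((hdf s (hJ s (hsub hs)).2).continuousAt).continuousWithinAt
    obtain ⟨c, hc, hc2⟩ := exists_hasDerivAt_eq_slope (fun s => mink n (γ s) y₀)
      (fun s => mink n (γ' s) y₀) hlt hcontf
      (fun s hs => hdf s (hJ s (hsub (Set.Ioo_subset_Icc_self hs))).2)
    have hcJ : c ∈ J := hsub (Set.Ioo_subset_Icc_self hc)
    have hgc : 0 < mink n (γ' c) y₀ := by
      have := hganti hcJ ht₀J hc.2
      simpa [hcrit] using this
    rw [eq_div_iff (by linarith : t₀ - t ≠ 0)] at hc2
    nlinarith [hc2, hgc]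
  · -- t₀ < t
    have hsub : Set.Icc t₀ t ⊆ J := fun s hs =>
      ⟨lt_of_lt_of_le ht₀J.1 hs.1, lt_of_le_of_lt hs.2 htJ.2⟩
    have hcontf : ContinuousOn (fun s => mink n (γ s) y₀) (Set.Icc t₀ t) := fun s hs =>
      ((hdf s (hJ s (hsub hs)).2).continuousAt).continuousWithinAt
    obtain ⟨c, hc, hc2⟩ := exists_hasDerivAt_eq_slope (fun s => mink n (γ s) y₀)
      (fun s => mink n (γ' s) y₀) hgt hcontf
      (fun s hs => hdf s (hJ s (hsub (Set.Ioo_subset_Icc_self hs))).2)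
    have hcJ : c ∈ J := hsub (Set.Ioo_subset_Icc_self hc)
    have hgc : mink n (γ' c) y₀ < 0 := by
      have := hganti ht₀J hcJ hc.1
      simpa [hcrit] using this
    rw [eq_div_iff (by linarith : t - t₀ ≠ 0)] at hc2
    nlinarith [hc2, hgc]
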